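/- Let F be a field of characteristic 0, A an additive abelian group, T an F-vector space, and φ : T × A → F a map F-linear in the first variable and additive in the second, and suppose φ is nondegenerate. Then for every finitely generated subgroup Ā of A and every finite-dimensional subspace T̄ of T, there exist a finitely generated subgroup A' of A containing Ā and a finite-dimensional subspace T' of T containing T̄ such that (A',T') is a nondegenerate pair. -/

import Mathlib

/-! Generalized Witt algebras `W(A,T,φ)` over a field `F` of characteristic `0`,
following Djokovic-Zhao. Here `A` is an (additive) abelian group, `T` an
`F`-vector space, and `φ : T × A → F` is `F`-linear in the first variable and
additive in the second (encoded as `φ : T →ₗ[F] (A →+ F)`). -/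

namespace GW

variable {F : Type*} [Field F]
variable {A : Type*} [AddCommGroup A]
variable {T : Type*} [AddCommGroup T] [Module F T]
variable (φ : T →ₗ[F] (A →+ F))

/-- The bracket on finitely supported functions `A →₀ T`: the bilinear extension of
`[t^α a, t^β b] = t^(α+β) (φ a β • b - φ b α • a)`. -/
noncomputable def brk (x y : A →₀ T) : A →₀ T :=
  x.sum fun α a => y.sum fun β b => Finsupp.single (α + β) (φ a β • b - φ b α • a)

lemma brk_zero_left (y : A →₀ T) : brk φ 0 y = 0 := by
  simp [brk]

lemma brk_zero_right (x : A →₀ T) : brk φ x 0 = 0 := by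
  simp [brk]

lemma brk_single_single (α β : A) (a b : T) :
    brk φ (Finsupp.single α a) (Finsupp.single β b)
      = Finsupp.single (α + β) (φ a β • b - φ b α • a) := by
  unfold brk
  rw [Finsupp.sum_single_index, Finsupp.sum_single_index]
  · simp
  · simp

lemma brk_add_left (x x' y : A →₀ T) : brk φ (x + x') y = brk φ x y + brk φ x' y := by
  unfold brk
  rw [Finsupp.sum_add_index']
  · intro α; simp
  · intro α a a'
    rw [← Finsupp.sum_add]
    congr 1
    funext β b
    rw [← Finsupp.single_add]
    congr 1
    simp only [map_add, LinearMap.add_apply, AddMonoidHom.add_apply, add_smul, smul_add]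
    abel

lemma brk_add_right (x y y' : A →₀ T) : brk φ x (y + y') = brk φ x y + brk φ x y' := by
  unfold brk
  rw [← Finsupp.sum_add]
  congr 1
  funext α a
  rw [Finsupp.sum_add_index']
  · intro β; simp
  · intro β b b'
    rw [← Finsupp.single_add]
    congr 1
    simp only [map_add, LinearMap.add_apply, AddMonoidHom.add_apply, add_smul, smul_add]
    abel

lemma brk_neg_swap (x y : A →₀ T) : brk φ y x = - brk φ x y := by
  unfold brk
  rw [Finsupp.sum_comm]
  rw [← Finsupp.sum_neg]
  congr 1
  funext α a
  rw [← Finsupp.sum_neg]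
  congr 1
  funext β b
  rw [← Finsupp.single_neg, add_comm β α]
  congr 1
  abel

lemma brk_smul_right (c : F) (x y : A →₀ T) : brk φ x (c • y) = c • brk φ x y := by
  unfold brk
  rw [Finsupp.smul_sum]
  congr 1
  funext α a
  rw [Finsupp.sum_smul_index', Finsupp.smul_sum]
  · congr 1
    funext β b
    rw [Finsupp.smul_single]
    congr 1
    simp only [map_smul, LinearMap.smul_apply, AddMonoidHom.smul_apply, smul_sub, smul_smul,
      smul_eq_mul]
    rw [mul_comm]
  · intro β; simp

lemma brk_self [CharZero F] (x : A →₀ T) : brk φ x x = 0 := by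
  have h : brk φ x x = -brk φ x x := brk_neg_swap φ x x
  have h2 : (2 : F) • brk φ x x = 0 := by
    rw [two_smul]
    nth_rewrite 2 [h]
    simp
  calc brk φ x x = (2 : F)⁻¹ • ((2 : F) • brk φ x x) :=
        (inv_smul_smul₀ two_ne_zero _).symm
    _ = 0 := by rw [h2, smul_zero]

lemma brk_leibniz (x y z : A →₀ T) :
    brk φ x (brk φ y z) = brk φ (brk φ x y) z + brk φ y (brk φ x z) := by
  induction x using Finsupp.induction_linear with
  | zero => simp [brk_zero_left, brk_zero_right]
  | add f g hf hg =>
      simp only [brk_add_left, brk_add_right, hf, hg]; abel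
  | single α a =>
    induction y using Finsupp.induction_linear with
    | zero => simp [brk_zero_left, brk_zero_right]
    | add f g hf hg =>
        simp only [brk_add_left, brk_add_right, hf, hg]; abel
    | single β b =>
      induction z using Finsupp.induction_linear with
      | zero => simp [brk_zero_left, brk_zero_right]
      | add f g hf hg =>
          simp only [brk_add_left, brk_add_right, hf, hg]; abel
      | single γ c =>
        rw [brk_single_single, brk_single_single, brk_single_single, brk_single_single,
          brk_single_single, brk_single_single]
        rw [show β + (α + γ) = α + β + γ by abel, show α + (β + γ) = α + β + γ by abel,
          ← Finsupp.single_add]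
        congr 1
        simp only [map_add, map_sub, map_smul, LinearMap.sub_apply, LinearMap.smul_apply,
          AddMonoidHom.add_apply, AddMonoidHom.sub_apply, AddMonoidHom.smul_apply,
          smul_eq_mul, smul_sub, sub_smul, add_smul, smul_smul]
        ring_nf
        module

variable (F A T) in
/-- The carrier of the generalized Witt algebra `W(A,T,φ)`: finitely supported
functions from `A` to `T`, where `t^α ∂` corresponds to the function supported
at `α` with value `∂`. -/
@[nolint unusedArguments]
def W (_φ : T →ₗ[F] (A →+ F)) : Type _ := A →₀ T

noncomputable instance : AddCommGroup (W F A T φ) := inferInstanceAs (AddCommGroup (A →₀ T))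

noncomputable instance : Module F (W F A T φ) := inferInstanceAs (Module F (A →₀ T))

/-- The element `t^α ∂` of the generalized Witt algebra. -/
noncomputable def tt (α : A) (d : T) : W F A T φ := Finsupp.single α d

/-- The underlying finitely supported function of an element of `W(A,T,φ)`. -/
def toF (x : W F A T φ) : A →₀ T := x

/-- The Lie ring structure on the generalized Witt algebra `W(A,T,φ)`, with bracket
determined by `[t^α ∂, t^β ∂'] = t^(α+β) (φ(∂,β) • ∂' - φ(∂',α) • ∂)`. -/
noncomputable instance [CharZero F] : LieRing (W F A T φ) :=
  { (inferInstanceAs (AddCommGroup (A →₀ T)) : AddCommGroup (A →₀ T)) with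
    bracket := fun x y => brk φ (toF φ x) (toF φ y)
    add_lie := fun x y z => brk_add_left φ x y z
    lie_add := fun x y z => brk_add_right φ x y z
    lie_self := fun x => brk_self φ x
    leibniz_lie := fun x y z => brk_leibniz φ x y z }

/-- The generalized Witt algebra `W(A,T,φ)` as a Lie algebra over `F`. -/
noncomputable instance [CharZero F] : LieAlgebra F (W F A T φ) :=
  { (inferInstanceAs (Module F (A →₀ T)) : Module F (A →₀ T)) with
    lie_smul := fun c x y => brk_smul_right φ c x y }

@[simp] theorem bracket_tt [CharZero F] (α β : A) (a b : T) :
    ⁅tt φ α a, tt φ β b⁆ = tt φ (α + β) (φ a β • b - φ b α • a) :=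
  brk_single_single φ α β a b

/-- Nondegeneracy of the map `φ`. -/
def Nondeg : Prop :=
  (∀ α : A, (∀ d : T, φ d α = 0) → α = 0) ∧ (∀ d : T, (∀ α : A, φ d α = 0) → d = 0)

/-- `(A', T')` is a nondegenerate pair for `φ`. -/
def NondegPair (A' : AddSubgroup A) (T' : Submodule F T) : Prop :=
  (∀ d ∈ T', (∀ α ∈ A', φ d α = 0) → d = 0) ∧
  (∀ α ∈ A', (∀ d ∈ T', φ d α = 0) → α = 0)

/-- The subset (in fact Lie subalgebra) of `W(A,T,φ)` consisting of the finitely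
supported functions supported in `A'` with values in `T'`. -/
def supportedIn (A' : AddSubgroup A) (T' : Submodule F T) : Set (W F A T φ) :=
  {x | (∀ α : A, toF φ x α ∈ T') ∧ ∀ α : A, α ∉ A' → toF φ x α = 0}

end GW

/-- Lemma 3.1': for `φ` nondegenerate, any finitely generated subgroup
`Ā ≤ A` and any finite-dimensional subspace `T̄ ≤ T` are contained in a finitely
generated subgroup `A'` and a finite-dimensional subspace `T'` forming a
nondegenerate pair. -/
theorem GW.exists_nondegPair_extending
    {F : Type*} [Field F] [CharZero F]
    {A : Type*} [AddCommGroup A]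
    {T : Type*} [AddCommGroup T] [Module F T]
    (φ : T →ₗ[F] (A →+ F)) (hφ : GW.Nondeg φ)
    (Abar : AddSubgroup A) (hAbar : Abar.FG)
    (Tbar : Submodule F T) (hTbar : FiniteDimensional F Tbar) :
    ∃ (A' : AddSubgroup A) (T' : Submodule F T),
      Abar ≤ A' ∧ A'.FG ∧ Tbar ≤ T' ∧ FiniteDimensional F T' ∧ GW.NondegPair φ A' T' := by
    classical
  -- the additive map sending `α` to the linear functional `d ↦ φ d α`
  let ψ : A →+ Module.Dual F T :=
    { toFun := fun α =>
        { toFun := fun d => φ d α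
          map_add' := fun d d' => by simp
          map_smul' := fun c d => by simp }
      map_zero' := by ext d; simp
      map_add' := fun α β => by ext d; simp }
  have hψ : ∀ α d, ψ α d = φ d α := fun α d => rfl
  -- Step 1: a finite subset of `A` separating points of `Tbar`.
  have step1 : ∃ s : Finset A, ∀ d ∈ Tbar, (∀ α ∈ s, φ d α = 0) → d = 0 := by
    let K : Finset A → Submodule F T := fun s =>
      Tbar ⊓ ⨅ α ∈ s, LinearMap.ker (ψ α : Module.Dual F T)
    have hKle : ∀ s, K s ≤ Tbar := fun s => inf_le_left
    have hKmem : ∀ (s : Finset A) (d : T),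
        d ∈ K s ↔ d ∈ Tbar ∧ ∀ α ∈ s, φ d α = 0 := by
      intro s d
      simp [K, Submodule.mem_inf, Submodule.mem_iInf, LinearMap.mem_ker, hψ]
    have hfd : ∀ s, FiniteDimensional F (K s) := fun s =>
      Submodule.finiteDimensional_of_le (hKle s)
    suffices h : ∀ n : ℕ, ∀ s : Finset A, Module.finrank F (K s) ≤ n →
        ∃ t : Finset A, K t = ⊥ by
      obtain ⟨t, ht⟩ := h (Module.finrank F (K ∅)) ∅ le_rfl
      refine ⟨t, fun d hd h0 => ?_⟩
      have : d ∈ K t := (hKmem t d).2 ⟨hd, h0⟩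
      rw [ht] at this
      simpa using this
    intro n
    induction n with
    | zero =>
      intro s hs
      by_cases hbot : K s = ⊥
      · exact ⟨s, hbot⟩
      · obtain ⟨d, hd, hd0⟩ := (Submodule.ne_bot_iff _).1 hbot
        exfalso
        haveI := hfd s
        have hz : K s = ⊥ := Submodule.finrank_eq_zero.1 (by omega)
        exact hbot hz
    | succ n ih =>
      intro s hs
      by_cases hbot : K s = ⊥
      · exact ⟨s, hbot⟩
      · obtain ⟨d, hd, hd0⟩ := (Submodule.ne_bot_iff _).1 hbot
        obtain ⟨α, hα⟩ : ∃ α, φ d α ≠ 0 := by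
          by_contra hc
          push_neg at hc
          exact hd0 (hφ.2 d hc)
        have hlt : K (insert α s) < K s := by
          refine lt_of_le_of_ne ?_ ?_
          · refine inf_le_inf_left _ ?_
            exact le_iInf₂ fun β hβ =>
              iInf₂_le β (Finset.mem_insert_of_mem hβ)
          · intro he
            have : d ∈ K (insert α s) := he ▸ hd
            exact hα (((hKmem _ d).1 this).2 α (Finset.mem_insert_self α s))
        haveI := hfd s
        have := Submodule.finrank_lt_finrank_of_lt hlt
        exact ih (insert α s) (by omega)
  obtain ⟨g, hg⟩ := hAbar
  obtain ⟨s, hs⟩ := step1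
  -- the enlarged finitely generated subgroup
  set A' : AddSubgroup A := AddSubgroup.closure ↑(g ∪ s) with hA'
  have hAbarA' : Abar ≤ A' := by
    rw [← hg]
    exact AddSubgroup.closure_mono (by
      intro x hx
      simp only [Finset.coe_union, Set.mem_union]
      exact Or.inl hx)
  have hsA' : ∀ α ∈ s, α ∈ A' := fun α hα =>
    AddSubgroup.subset_closure (by
      simp only [Finset.coe_union, Set.mem_union]
      exact Or.inr hα)
  -- the span of the functionals coming from `A'`
  set S₁ : Submodule F (Module.Dual F T) :=
    Submodule.span F (ψ '' ↑(g ∪ s)) with hS₁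
  haveI hS₁fin : FiniteDimensional F S₁ :=
    FiniteDimensional.span_of_finite F ((g ∪ s).finite_toSet.image ψ)
  have hmemS₁ : ∀ α ∈ A', ψ α ∈ S₁ := by
    have : A' ≤ AddSubgroup.comap ψ S₁.toAddSubgroup := by
      rw [hA']
      refine AddSubgroup.closure_le _ |>.2 ?_
      intro x hx
      exact Submodule.subset_span ⟨x, hx, rfl⟩
    intro α hα
    exact this hα
  -- Step 2: enlarge `Tbar` killing the kernel `S₁ ⊓ dualAnnihilator`.
  have step2 : ∀ n : ℕ, ∀ T' : Submodule F T, Tbar ≤ T' → FiniteDimensional F T' →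
      (∀ d ∈ T', (∀ f ∈ S₁, f d = 0) → d = 0) →
      Module.finrank F ↥(S₁ ⊓ T'.dualAnnihilator) ≤ n →
      ∃ T'' : Submodule F T, T' ≤ T'' ∧ FiniteDimensional F T'' ∧
        (∀ d ∈ T'', (∀ f ∈ S₁, f d = 0) → d = 0) ∧
        S₁ ⊓ T''.dualAnnihilator = ⊥ := by
    intro n
    induction n with
    | zero =>
      intro T' hle hfd hinv hrk
      refine ⟨T', le_rfl, hfd, hinv, ?_⟩
      haveI : FiniteDimensional F ↥(S₁ ⊓ T'.dualAnnihilator) :=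
        Submodule.finiteDimensional_of_le inf_le_left
      have : Module.finrank F ↥(S₁ ⊓ T'.dualAnnihilator) = 0 := by omega
      exact Submodule.finrank_eq_zero.1 this
    | succ n ih =>
      intro T' hle hfd hinv hrk
      by_cases hbot : S₁ ⊓ T'.dualAnnihilator = ⊥
      · exact ⟨T', le_rfl, hfd, hinv, hbot⟩
      · obtain ⟨f, hf, hf0⟩ := (Submodule.ne_bot_iff _).1 hbot
        obtain ⟨d₀, hd₀⟩ : ∃ d₀, f d₀ ≠ 0 := by
          by_contra hc
          push_neg at hc
          exact hf0 (LinearMap.ext hc)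
        set T'' : Submodule F T := T' ⊔ (F ∙ d₀) with hT''
        haveI hfd'' : FiniteDimensional F T'' := by
          haveI := hfd
          exact Submodule.finiteDimensional_sup T' (F ∙ d₀)
        have hf' : f ∈ T'.dualAnnihilator := hf.2
        have hinv'' : ∀ d ∈ T'', (∀ f' ∈ S₁, f' d = 0) → d = 0 := by
          intro d hd hker
          obtain ⟨d', hd', e, he, rfl⟩ := Submodule.mem_sup.1 hd
          obtain ⟨c, rfl⟩ := Submodule.mem_span_singleton.1 he
          have h1 : f (d' + c • d₀) = 0 := hker f hf.1
          have h2 : f d' = 0 := (Submodule.mem_dualAnnihilator f).1 hf' d' hd'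
          have h3 : c * f d₀ = 0 := by
            have := h1
            rw [map_add, h2, zero_add, map_smul, smul_eq_mul] at this
            exact this
          have hc0 : c = 0 := by
            rcases mul_eq_zero.1 h3 with h | h
            · exact h
            · exact absurd h hd₀
          subst hc0
          rw [zero_smul, add_zero] at hker ⊢
          exact hinv d' hd' hker
        have hlt : S₁ ⊓ T''.dualAnnihilator < S₁ ⊓ T'.dualAnnihilator := by
          refine lt_of_le_of_ne (inf_le_inf_left _ (Submodule.dualAnnihilator_anti le_sup_left)) ?_
          intro he
          have : f ∈ S₁ ⊓ T''.dualAnnihilator := he ▸ hf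
          have : f d₀ = 0 := (Submodule.mem_dualAnnihilator f).1 this.2 d₀
            (le_sup_right (α := Submodule F T) (Submodule.mem_span_singleton_self d₀))
          exact hd₀ this
        haveI : FiniteDimensional F ↥(S₁ ⊓ T'.dualAnnihilator) :=
          Submodule.finiteDimensional_of_le inf_le_left
        have hdec := Submodule.finrank_lt_finrank_of_lt hlt
        obtain ⟨T₃, h1, h2, h3, h4⟩ := ih T'' (le_trans hle le_sup_left) hfd'' hinv'' (by omega)
        exact ⟨T₃, le_trans le_sup_left h1, h2, h3, h4⟩
  -- base invariant for `Tbar`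
  have hinv0 : ∀ d ∈ Tbar, (∀ f ∈ S₁, f d = 0) → d = 0 := by
    intro d hd hker
    refine hs d hd fun α hα => ?_
    have : ψ α ∈ S₁ := Submodule.subset_span ⟨α, by
      simp only [Finset.coe_union, Set.mem_union]; exact Or.inr hα, rfl⟩
    simpa [hψ] using hker (ψ α) this
  obtain ⟨T', hTle, hT'fd, hT'inv, hT'bot⟩ :=
    step2 (Module.finrank F ↥(S₁ ⊓ Tbar.dualAnnihilator)) Tbar le_rfl hTbar hinv0 le_rfl
  refine ⟨A', T', hAbarA', ⟨g ∪ s, rfl⟩, hTle, hT'fd, ?_, ?_⟩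
  · -- first nondegeneracy condition
    intro d hd h0
    refine hT'inv d hd fun f hf => ?_
    refine Submodule.span_induction (p := fun f _ => f d = 0) ?_ ?_ ?_ ?_ hf
    · rintro x ⟨α, hα, rfl⟩
      have hαA' : α ∈ A' := AddSubgroup.subset_closure hα
      simpa [hψ] using h0 α hαA'
    · simp
    · intro x y hx hy hxd hyd
      simp [hxd, hyd]
    · intro c x hx hxd
      simp [hxd]
  · -- second nondegeneracy condition
    intro α hα h0
    have hmem : ψ α ∈ S₁ ⊓ T'.dualAnnihilator := by
      refine ⟨hmemS₁ α hα, (Submodule.mem_dualAnnihilator _).2 fun d hd => ?_⟩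
      simpa [hψ] using h0 d hd
    rw [hT'bot] at hmem
    have hz : ψ α = 0 := by simpa using hmem
    refine hφ.1 α fun d => ?_
    have := congrArg (fun f : Module.Dual F T => f d) hz
    simpa [hψ] using this
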